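/- arXiv:2202.07053 — 4 statements merged into one kernel-verified Lean document; each statement's English description precedes it below -/
import Mathlib

section
/- Let $\bar{x} \in \{0,1\}^n$, $\bar{y} \in \{0,1\}^m$, $\bar{z} \in \{0,1\}^l$, and let $n_{\bar{x}}, n_{\bar{y}}, n_{\bar{z}}$ denote the number of ones in $\bar{x}, \bar{y}, \bar{z}$ respectively. For every $(x,y,z) \in \{0,1\}^{n+m+l}$ with $(x,y,z) \neq (\bar{x},\bar{y},\bar{z})$, the number of triples $(i,j,k) \in [n]\times[m]\times[l]$ with $\bar{x}_i\bar{y}_j\bar{z}_k \neq x_i y_j z_k$ is at least $\min\{n_{\bar{x}} n_{\bar{y}}, n_{\bar{x}} n_{\bar{z}}, n_{\bar{y}} n_{\bar{z}}\}$. -/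
/-- Number of triples `(i,j,k)` where the rank-one tensors of `(xb,yb,zb)` and `(x,y,z)`
disagree. -/
def mismatchCount {n m l : ℕ} (xb : Fin n → Bool) (yb : Fin m → Bool) (zb : Fin l → Bool)
    (x : Fin n → Bool) (y : Fin m → Bool) (z : Fin l → Bool) : ℕ :=
  (Finset.univ.filter (fun e : Fin n × Fin m × Fin l =>
    (xb e.1 && yb e.2.1 && zb e.2.2) ≠ (x e.1 && y e.2.1 && z e.2.2))).card

/-- Number of ones in a binary vector. -/
def numOnes {n : ℕ} (v : Fin n → Bool) : ℕ :=
  (Finset.univ.filter (fun i => v i = true)).card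

lemma slice1 {n m l : ℕ} (p : Fin n × Fin m × Fin l → Prop) [DecidablePred p]
    (i : Fin n) (B : Finset (Fin m)) (C : Finset (Fin l))
    (h : ∀ j ∈ B, ∀ k ∈ C, p (i, j, k)) :
    B.card * C.card ≤ (Finset.univ.filter p).card := by
  have hsub : ({i} ×ˢ B ×ˢ C) ⊆ Finset.univ.filter p := by
    rintro ⟨a, b, c⟩ he
    simp only [Finset.mem_product, Finset.mem_singleton] at he
    obtain ⟨rfl, hb, hc⟩ := he
    simp only [Finset.mem_filter, Finset.mem_univ, true_and]
    exact h b hb c hc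
  calc B.card * C.card = ({i} ×ˢ B ×ˢ C).card := by
        simp [Finset.card_product]
    _ ≤ _ := Finset.card_le_card hsub

lemma slice2 {n m l : ℕ} (p : Fin n × Fin m × Fin l → Prop) [DecidablePred p]
    (j : Fin m) (A : Finset (Fin n)) (C : Finset (Fin l))
    (h : ∀ i ∈ A, ∀ k ∈ C, p (i, j, k)) :
    A.card * C.card ≤ (Finset.univ.filter p).card := by
  have hsub : (A ×ˢ {j} ×ˢ C) ⊆ Finset.univ.filter p := by
    rintro ⟨a, b, c⟩ he
    simp only [Finset.mem_product, Finset.mem_singleton] at he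
    obtain ⟨ha, rfl, hc⟩ := he
    simp only [Finset.mem_filter, Finset.mem_univ, true_and]
    exact h a ha c hc
  calc A.card * C.card = (A ×ˢ {j} ×ˢ C).card := by
        simp [Finset.card_product]
    _ ≤ _ := Finset.card_le_card hsub

lemma slice3 {n m l : ℕ} (p : Fin n × Fin m × Fin l → Prop) [DecidablePred p]
    (k : Fin l) (A : Finset (Fin n)) (B : Finset (Fin m))
    (h : ∀ i ∈ A, ∀ j ∈ B, p (i, j, k)) :
    A.card * B.card ≤ (Finset.univ.filter p).card := by
  have hsub : (A ×ˢ B ×ˢ {k}) ⊆ Finset.univ.filter p := by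
    rintro ⟨a, b, c⟩ he
    simp only [Finset.mem_product, Finset.mem_singleton] at he
    obtain ⟨ha, hb, rfl⟩ := he
    simp only [Finset.mem_filter, Finset.mem_univ, true_and]
    exact h a ha b hb
  calc A.card * B.card = (A ×ˢ B ×ˢ {k}).card := by
        simp [Finset.card_product]
    _ ≤ _ := Finset.card_le_card hsub

theorem stmt1 {n m l : ℕ} (xb : Fin n → Bool) (yb : Fin m → Bool) (zb : Fin l → Bool)
    (x : Fin n → Bool) (y : Fin m → Bool) (z : Fin l → Bool)
    (hne : ¬(x = xb ∧ y = yb ∧ z = zb)) :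
    min (min (numOnes xb * numOnes yb) (numOnes xb * numOnes zb))
        (numOnes yb * numOnes zb) ≤ mismatchCount xb yb zb x y z := by
  classical
  set p : Fin n × Fin m × Fin l → Prop := fun e =>
    (xb e.1 && yb e.2.1 && zb e.2.2) ≠ (x e.1 && y e.2.1 && z e.2.2) with hp
  have hmc : mismatchCount xb yb zb x y z = (Finset.univ.filter p).card := rfl
  rw [hmc]
  -- supports
  by_cases hX : ∃ i, xb i = true ∧ x i = false
  · obtain ⟨i, hxi, hxi'⟩ := hX
    refine le_trans (min_le_right _ _) ?_
    refine le_trans (le_of_eq rfl) (slice1 p i _ _ ?_)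
    intro j hj k hk
    simp only [Finset.mem_filter, Finset.mem_univ, true_and] at hj hk
    simp [p, hxi, hxi', hj, hk]
  · by_cases hY : ∃ j, yb j = true ∧ y j = false
    · obtain ⟨j, hyj, hyj'⟩ := hY
      refine le_trans (le_trans (min_le_left _ _) (min_le_right _ _)) ?_
      refine le_trans (le_of_eq rfl) (slice2 p j _ _ ?_)
      intro i hi k hk
      simp only [Finset.mem_filter, Finset.mem_univ, true_and] at hi hk
      simp [p, hyj, hyj', hi, hk]
    · by_cases hZ : ∃ k, zb k = true ∧ z k = false
      · obtain ⟨k, hzk, hzk'⟩ := hZ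
        refine le_trans (le_trans (min_le_left _ _) (min_le_left _ _)) ?_
        refine le_trans (le_of_eq rfl) (slice3 p k _ _ ?_)
        intro i hi j hj
        simp only [Finset.mem_filter, Finset.mem_univ, true_and] at hi hj
        simp [p, hzk, hzk', hi, hj]
      · -- now xb ≤ x, yb ≤ y, zb ≤ z pointwise
        push_neg at hX hY hZ
        have hx' : ∀ i, xb i = true → x i = true := fun i h => by
          have := hX i h; simpa using this
        have hy' : ∀ j, yb j = true → y j = true := fun j h => by
          have := hY j h; simpa using this
        have hz' : ∀ k, zb k = true → z k = true := fun k h => by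
          have := hZ k h; simpa using this
        have monoY : numOnes yb ≤ numOnes y :=
          Finset.card_le_card (fun j hj => by
            simp only [Finset.mem_filter, Finset.mem_univ, true_and] at hj ⊢
            exact hy' j hj)
        have monoZ : numOnes zb ≤ numOnes z :=
          Finset.card_le_card (fun k hk => by
            simp only [Finset.mem_filter, Finset.mem_univ, true_and] at hk ⊢
            exact hz' k hk)
        have monoX : numOnes xb ≤ numOnes x :=
          Finset.card_le_card (fun i hi => by
            simp only [Finset.mem_filter, Finset.mem_univ, true_and] at hi ⊢
            exact hx' i hi)
        by_cases hxe : x = xb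
        · by_cases hye : y = yb
          · have hze : z ≠ zb := fun h => hne ⟨hxe, hye, h⟩
            obtain ⟨k, hk⟩ := Function.ne_iff.mp hze
            have hzk : z k = true ∧ zb k = false := by
              cases h1 : zb k
              · cases h2 : z k
                · rw [h1, h2] at hk; exact absurd rfl hk
                · exact ⟨rfl, rfl⟩
              · exact absurd (hz' k h1) (by rw [h1] at hk; simpa using hk)
            refine le_trans (le_trans (min_le_left _ _) (min_le_left _ _)) ?_
            refine le_trans (Nat.mul_le_mul monoX monoY) ?_
            refine slice3 p k _ _ ?_
            intro i hi j hj
            simp only [Finset.mem_filter, Finset.mem_univ, true_and] at hi hj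
            simp [p, hzk.1, hzk.2, hi, hj]
          · obtain ⟨j, hj⟩ := Function.ne_iff.mp hye
            have hyj : y j = true ∧ yb j = false := by
              cases h1 : yb j
              · cases h2 : y j
                · rw [h1, h2] at hj; exact absurd rfl hj
                · exact ⟨rfl, rfl⟩
              · exact absurd (hy' j h1) (by rw [h1] at hj; simpa using hj)
            refine le_trans (le_trans (min_le_left _ _) (min_le_right _ _)) ?_
            refine le_trans (Nat.mul_le_mul monoX monoZ) ?_
            refine slice2 p j _ _ ?_
            intro i hi k hk
            simp only [Finset.mem_filter, Finset.mem_univ, true_and] at hi hk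
            simp [p, hyj.1, hyj.2, hi, hk]
        · obtain ⟨i, hi⟩ := Function.ne_iff.mp hxe
          have hxi : x i = true ∧ xb i = false := by
            cases h1 : xb i
            · cases h2 : x i
              · rw [h1, h2] at hi; exact absurd rfl hi
              · exact ⟨rfl, rfl⟩
            · exact absurd (hx' i h1) (by rw [h1] at hi; simpa using hi)
          refine le_trans (min_le_right _ _) ?_
          refine le_trans (Nat.mul_le_mul monoY monoZ) ?_
          refine slice1 p i _ _ ?_
          intro j hj k hk
          simp only [Finset.mem_filter, Finset.mem_univ, true_and] at hj hk
          simp [p, hxi.1, hxi.2, hj, hk]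
end

section
/- Let $X_1, X_2$ be nonnegative independent real random variables with $\mathbb{E}[X_1] > 0$ and $\mathbb{E}[X_2] > 0$, and suppose for every $t > 0$ that $\Pr[|X_1 - \mathbb{E}[X_1]| \ge t] \le f_1(t)$ and $\Pr[|X_2 - \mathbb{E}[X_2]| \ge t] \le f_2(t)$. Then for every $t > 0$, $\Pr[|X_1 X_2 - \mathbb{E}[X_1 X_2]| \ge t] \le f_1\left(\frac{t}{\sqrt{t \mathbb{E}[X_2]/\mathbb{E}[X_1]} + 2\mathbb{E}[X_2]}\right) + f_2\left(\frac{t}{\sqrt{t \mathbb{E}[X_1]/\mathbb{E}[X_2]} + 2\mathbb{E}[X_1]}\right)$. -/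
open MeasureTheory ProbabilityTheory

theorem stmt4 {Ω : Type*} [MeasurableSpace Ω] (μ : Measure Ω) [IsProbabilityMeasure μ]
    (X1 X2 : Ω → ℝ) (h1 : ∀ ω, 0 ≤ X1 ω) (h2 : ∀ ω, 0 ≤ X2 ω)
    (hind : IndepFun X1 X2 μ)
    (hint1 : Integrable X1 μ) (hint2 : Integrable X2 μ)
    (hint12 : Integrable (fun ω => X1 ω * X2 ω) μ)
    (hm1 : 0 < ∫ ω, X1 ω ∂μ) (hm2 : 0 < ∫ ω, X2 ω ∂μ)
    (f1 f2 : ℝ → ℝ)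
    (hf1 : ∀ t > 0, μ {ω | t ≤ |X1 ω - ∫ ω', X1 ω' ∂μ|} ≤ ENNReal.ofReal (f1 t))
    (hf2 : ∀ t > 0, μ {ω | t ≤ |X2 ω - ∫ ω', X2 ω' ∂μ|} ≤ ENNReal.ofReal (f2 t))
    (t : ℝ) (ht : 0 < t) :
    μ {ω | t ≤ |X1 ω * X2 ω - ∫ ω', X1 ω' * X2 ω' ∂μ|}
      ≤ ENNReal.ofReal
          (f1 (t / (Real.sqrt (t * (∫ ω', X2 ω' ∂μ) / ∫ ω', X1 ω' ∂μ) + 2 * ∫ ω', X2 ω' ∂μ)))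
        + ENNReal.ofReal
          (f2 (t / (Real.sqrt (t * (∫ ω', X1 ω' ∂μ) / ∫ ω', X2 ω' ∂μ) + 2 * ∫ ω', X1 ω' ∂μ))) := by
  set m1 := ∫ ω', X1 ω' ∂μ with hm1def
  set m2 := ∫ ω', X2 ω' ∂μ with hm2def
  set a := Real.sqrt (t * m2 / m1) with ha
  set b := Real.sqrt (t * m1 / m2) with hb
  have ha0 : 0 ≤ a := Real.sqrt_nonneg _
  have hb0 : 0 ≤ b := Real.sqrt_nonneg _
  have hab : a * b = t := by
    rw [ha, hb, ← Real.sqrt_mul (by positivity)]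
    rw [show t * m2 / m1 * (t * m1 / m2) = t * t by field_simp]
    exact Real.sqrt_mul_self ht.le
  set s1 := t / (a + 2 * m2) with hs1
  set s2 := t / (b + 2 * m1) with hs2
  have hd1 : 0 < a + 2 * m2 := by positivity
  have hd2 : 0 < b + 2 * m1 := by positivity
  have hs1p : 0 < s1 := by positivity
  have hs2p : 0 < s2 := by positivity
  have e1 : s1 * (a + 2 * m2) = t := div_mul_cancel₀ _ hd1.ne'
  have e2 : s2 * (b + 2 * m1) = t := div_mul_cancel₀ _ hd2.ne'
  have hkey : s1 * s2 + m1 * s2 + m2 * s1 ≤ t := by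
    have hpos : 0 < (a + 2 * m2) * (b + 2 * m1) := by positivity
    have expand : (s1 * s2 + m1 * s2 + m2 * s1) * ((a + 2 * m2) * (b + 2 * m1))
        = (s1 * (a + 2 * m2)) * (s2 * (b + 2 * m1))
          + m1 * (s2 * (b + 2 * m1)) * (a + 2 * m2)
          + m2 * (s1 * (a + 2 * m2)) * (b + 2 * m1) := by ring
    have habt : t * (a * b) = t * t := by rw [hab]
    have key2 : (s1 * s2 + m1 * s2 + m2 * s1) * ((a + 2 * m2) * (b + 2 * m1))
        ≤ t * ((a + 2 * m2) * (b + 2 * m1)) := by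
      rw [expand, e1, e2]
      nlinarith [habt, mul_nonneg (mul_nonneg hm1.le ha0) ht.le,
        mul_nonneg (mul_nonneg hm2.le hb0) ht.le]
    exact le_of_mul_le_mul_right key2 hpos
  have hEmul : (∫ ω', X1 ω' * X2 ω' ∂μ) = m1 * m2 := by
    have := hind.integral_mul_eq_mul_integral hint1.aestronglyMeasurable hint2.aestronglyMeasurable
    simpa [Pi.mul_apply] using this
  have hsub : {ω | t ≤ |X1 ω * X2 ω - ∫ ω', X1 ω' * X2 ω' ∂μ|}
      ⊆ {ω | s1 ≤ |X1 ω - m1|} ∪ {ω | s2 ≤ |X2 ω - m2|} := by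
    intro ω hω
    by_contra hc
    simp only [Set.mem_union, Set.mem_setOf_eq, not_or, not_le] at hc
    obtain ⟨hc1, hc2⟩ := hc
    simp only [Set.mem_setOf_eq, hEmul] at hω
    have hdecomp : X1 ω * X2 ω - m1 * m2
        = (X1 ω - m1) * (X2 ω - m2) + m1 * (X2 ω - m2) + m2 * (X1 ω - m1) := by ring
    have hbound : |X1 ω * X2 ω - m1 * m2| < t := by
      calc |X1 ω * X2 ω - m1 * m2|
          ≤ |(X1 ω - m1) * (X2 ω - m2)| + |m1 * (X2 ω - m2)| + |m2 * (X1 ω - m1)| := by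
            rw [hdecomp]
            exact (abs_add_le _ _).trans (add_le_add_left (abs_add_le _ _) _)
        _ = |X1 ω - m1| * |X2 ω - m2| + m1 * |X2 ω - m2| + m2 * |X1 ω - m1| := by
            rw [abs_mul, abs_mul, abs_mul, abs_of_pos hm1, abs_of_pos hm2]
        _ < s1 * s2 + m1 * s2 + m2 * s1 := by
            have h1' := abs_nonneg (X1 ω - m1)
            have h2' := abs_nonneg (X2 ω - m2)
            nlinarith
        _ ≤ t := hkey
    exact absurd hω (not_le.mpr hbound)
  calc μ {ω | t ≤ |X1 ω * X2 ω - ∫ ω', X1 ω' * X2 ω' ∂μ|}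
      ≤ μ ({ω | s1 ≤ |X1 ω - m1|} ∪ {ω | s2 ≤ |X2 ω - m2|}) := measure_mono hsub
    _ ≤ μ {ω | s1 ≤ |X1 ω - m1|} + μ {ω | s2 ≤ |X2 ω - m2|} := measure_union_le _ _
    _ ≤ _ := add_le_add (hf1 s1 hs1p) (hf2 s2 hs2p)
end

section
/- Let $a, b, t > 0$ and set $\beta = 2 + \sqrt{t/(ab)}$. If real numbers $x_1 < a + \frac{t}{\beta b}$ and $x_2 < b + \frac{t}{\beta a}$ with $x_1, x_2 \ge 0$, then $x_1 x_2 < ab + t$. -/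
theorem stmt5 (a b t : ℝ) (ha : 0 < a) (hb : 0 < b) (ht : 0 < t)
    (x1 x2 : ℝ) (hx1nn : 0 ≤ x1) (hx2nn : 0 ≤ x2)
    (hx1 : x1 < a + t / ((2 + Real.sqrt (t / (a * b))) * b))
    (hx2 : x2 < b + t / ((2 + Real.sqrt (t / (a * b))) * a)) :
    x1 * x2 < a * b + t := by
  set s := Real.sqrt (t / (a * b)) with hs
  have hsnn : 0 ≤ s := Real.sqrt_nonneg _
  have hs2 : s ^ 2 = t / (a * b) := Real.sq_sqrt (le_of_lt (div_pos ht (mul_pos ha hb)))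
  have hst : s ^ 2 * (a * b) = t := by
    rw [hs2]; field_simp
  have hβ : (0:ℝ) < 2 + s := by linarith
  have key : (a + t / ((2 + s) * b)) * (b + t / ((2 + s) * a)) ≤ a * b + t := by
    have h1 : t / ((2 + s) * b) = s ^ 2 * a / (2 + s) := by
      rw [← hst]; field_simp
    have h2 : t / ((2 + s) * a) = s ^ 2 * b / (2 + s) := by
      rw [← hst]; field_simp
    rw [h1, h2, ← hst,
      show a + s ^ 2 * a / (2 + s) = a * (2 + s + s ^ 2) / (2 + s) by field_simp,
      show b + s ^ 2 * b / (2 + s) = b * (2 + s + s ^ 2) / (2 + s) by field_simp,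
      div_mul_div_comm, div_le_iff₀ (mul_pos hβ hβ)]
    nlinarith [mul_pos ha hb, sq_nonneg s, mul_nonneg (mul_nonneg hsnn hsnn) (mul_pos ha hb).le, mul_nonneg hsnn (mul_pos ha hb).le, sq_nonneg (s*s), mul_nonneg (mul_nonneg (mul_nonneg hsnn hsnn) hsnn) (mul_pos ha hb).le]
  calc x1 * x2 < (a + t / ((2 + s) * b)) * (b + t / ((2 + s) * a)) :=
        mul_lt_mul'' hx1 hx2 hx1nn hx2nn
    _ ≤ a * b + t := key
end

section
/- Let $p$ be a constant with $p > 1/2$ and let $r_{\bar{x}}, r_{\bar{y}}, r_{\bar{z}} \in (0,1]$ be positive constants. Under the fully-random corruption model with ground truth $\bar{W} = \bar{x} \otimes \bar{y} \otimes \bar{z}$ where $\bar{x},\bar{y},\bar{z}$ have density ratios $r_{\bar{x}}, r_{\bar{y}}, r_{\bar{z}}$, the probability that the rank-one Boolean tensor factorization problem $\min_{x,y,z \in \{0,1\}} \|G - x \otimes y \otimes z\|^2$ recovers the ground truth tends to $0$ as $n, m, l \to \infty$. In fact, this probability is at most $\exp(-2 \min\{r_{\bar{x}} n\, r_{\bar{y}}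 m,\; r_{\bar{x}} n\, r_{\bar{z}} l,\; r_{\bar{y}} m\, r_{\bar{z}} l\}(p - 1/2)^2)$. -/
open MeasureTheory ProbabilityTheory

/-- Number of triples `(i,j,k)` where the rank-one tensor of `(u,v,w)` disagrees with the
observed binary tensor `g`. -/
def objCount {n m l : ℕ} (g : Fin n × Fin m × Fin l → Bool)
    (u : Fin n → Bool) (v : Fin m → Bool) (w : Fin l → Bool) : ℕ :=
  (Finset.univ.filter (fun e : Fin n × Fin m × Fin l =>
    (u e.1 && v e.2.1 && w e.2.2) ≠ g e)).card

lemma aux_pow_le {p : ℝ} (hq0 : 0 ≤ 1 - p) (hqp : 1 - p ≤ p) {k N : ℕ} (hk : 2 * k ≤ N) :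
    p ^ k * (1 - p) ^ (N - k) ≤ Real.sqrt (p * (1 - p)) ^ N := by
  obtain ⟨a, rfl⟩ : ∃ a, N = a + 2 * k := ⟨N - 2 * k, by omega⟩
  set q := 1 - p with hq
  have hp0 : 0 ≤ p := le_trans hq0 hqp
  have hsub : a + 2 * k - k = a + k := by omega
  rw [hsub]
  have hL : 0 ≤ p ^ k * q ^ (a + k) := by positivity
  have hRsq : (Real.sqrt (p * q) ^ (a + 2 * k)) ^ 2 = (p * q) ^ (a + 2 * k) := by
    rw [← pow_mul, mul_comm (a + 2 * k) 2, pow_mul, Real.sq_sqrt (by positivity)]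
  have h2 : (p ^ k * q ^ (a + k)) ^ 2 ≤ (p * q) ^ (a + 2 * k) := by
    have e1 : (p ^ k * q ^ (a + k)) ^ 2 = (p ^ (2 * k) * q ^ a) * q ^ (a + 2 * k) := by
      rw [mul_pow, ← pow_mul, ← pow_mul, mul_assoc, ← pow_add,
        show k * 2 = 2 * k from by omega, show (a + k) * 2 = a + (a + 2 * k) from by omega]
    have e2 : (p * q) ^ (a + 2 * k) = p ^ (a + 2 * k) * q ^ (a + 2 * k) := mul_pow _ _ _
    rw [e1, e2]
    have h3 : p ^ (2 * k) * q ^ a ≤ p ^ (a + 2 * k) := by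
      calc p ^ (2 * k) * q ^ a ≤ p ^ (2 * k) * p ^ a := by
            exact mul_le_mul_of_nonneg_left (pow_le_pow_left₀ hq0 hqp _) (by positivity)
        _ = p ^ (a + 2 * k) := by rw [← pow_add]; ring_nf
    have hqN : 0 ≤ q ^ (a + 2 * k) := by positivity
    exact mul_le_mul_of_nonneg_right h3 hqN
  calc p ^ k * q ^ (a + k) = Real.sqrt ((p ^ k * q ^ (a + k)) ^ 2) := (Real.sqrt_sq hL).symm
    _ ≤ Real.sqrt ((p * q) ^ (a + 2 * k)) := Real.sqrt_le_sqrt h2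
    _ = Real.sqrt (p * q) ^ (a + 2 * k) := by rw [← hRsq, Real.sqrt_sq (by positivity)]

lemma aux_sqrt_exp (p : ℝ) :
    2 * Real.sqrt (p * (1 - p)) ≤ Real.exp (-2 * (p - 1 / 2) ^ 2) := by
  have h1 : 2 * Real.sqrt (p * (1 - p)) = Real.sqrt (4 * (p * (1 - p))) := by
    rw [Real.sqrt_mul (by norm_num : (0:ℝ) ≤ 4),
      show Real.sqrt 4 = 2 from by
        rw [show (4:ℝ) = 2 ^ 2 by norm_num, Real.sqrt_sq (by norm_num)]]
  have hE : 0 ≤ Real.exp (-2 * (p - 1 / 2) ^ 2) := (Real.exp_pos _).le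
  have h2 : 4 * (p * (1 - p)) ≤ (Real.exp (-2 * (p - 1 / 2) ^ 2)) ^ 2 := by
    rw [← Real.exp_nat_mul]
    have := Real.add_one_le_exp ((2 : ℕ) * (-2 * (p - 1 / 2) ^ 2))
    nlinarith [this]
  calc 2 * Real.sqrt (p * (1 - p)) = Real.sqrt (4 * (p * (1 - p))) := h1
    _ ≤ Real.sqrt ((Real.exp (-2 * (p - 1 / 2) ^ 2)) ^ 2) := Real.sqrt_le_sqrt h2
    _ = Real.exp (-2 * (p - 1 / 2) ^ 2) := Real.sqrt_sq hE

lemma count_aux {n m l : ℕ} (xb : Fin n → Bool) (yb : Fin m → Bool) (zb : Fin l → Bool)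
    (c : Fin n × Fin m × Fin l → Bool)
    (h : objCount (fun e => xor (c e) (xb e.1 && yb e.2.1 && zb e.2.2)) xb yb zb
        < objCount (fun e => xor (c e) (xb e.1 && yb e.2.1 && zb e.2.2)) xb yb (fun _ => false)) :
    2 * ((Finset.univ.filter (fun e : Fin n × Fin m × Fin l =>
          (xb e.1 && yb e.2.1 && zb e.2.2) = true)).filter (fun e => c e = true)).card
      < (Finset.univ.filter (fun e : Fin n × Fin m × Fin l =>
          (xb e.1 && yb e.2.1 && zb e.2.2) = true)).card := by
  classical
  set A := Finset.univ.filter (fun e : Fin n × Fin m × Fin l =>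
    c e = true ∧ (xb e.1 && yb e.2.1 && zb e.2.2) = true) with hA
  set B := Finset.univ.filter (fun e : Fin n × Fin m × Fin l =>
    c e = true ∧ (xb e.1 && yb e.2.1 && zb e.2.2) = false) with hB
  set E := Finset.univ.filter (fun e : Fin n × Fin m × Fin l =>
    c e = false ∧ (xb e.1 && yb e.2.1 && zb e.2.2) = true) with hE
  have hdisj1 : Disjoint A B := by
    rw [Finset.disjoint_left]
    intro e heA heB
    simp only [hA, hB, Finset.mem_filter] at heA heB
    simp [heA.2.2] at heB
  have hdisj2 : Disjoint E B := by
    rw [Finset.disjoint_left]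
    intro e heA heB
    simp only [hE, hB, Finset.mem_filter] at heA heB
    simp [heA.2.1] at heB
  have hbar : objCount (fun e => xor (c e) (xb e.1 && yb e.2.1 && zb e.2.2)) xb yb zb
      = A.card + B.card := by
    rw [objCount, ← Finset.card_union_of_disjoint hdisj1]
    congr 1
    ext e
    simp only [hA, hB, Finset.mem_filter, Finset.mem_univ, true_and, Finset.mem_union, ne_eq]
    cases hc : c e <;> cases hb : (xb e.1 && yb e.2.1 && zb e.2.2) <;> simp
  have halt : objCount (fun e => xor (c e) (xb e.1 && yb e.2.1 && zb e.2.2)) xb yb (fun _ => false)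
      = E.card + B.card := by
    rw [objCount, ← Finset.card_union_of_disjoint hdisj2]
    congr 1
    ext e
    simp only [hE, hB, Finset.mem_filter, Finset.mem_univ, true_and, Finset.mem_union, ne_eq,
      Bool.and_false]
    cases hc : c e <;> cases hb : (xb e.1 && yb e.2.1 && zb e.2.2) <;> simp
  have hN : (Finset.univ.filter (fun e : Fin n × Fin m × Fin l =>
      (xb e.1 && yb e.2.1 && zb e.2.2) = true)).card = A.card + E.card := by
    have hd : Disjoint A E := by
      rw [Finset.disjoint_left]
      intro e heA heB
      simp only [hA, hE, Finset.mem_filter] at heA heB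
      exact absurd heB.2.1 (by simp [heA.2.1])
    rw [← Finset.card_union_of_disjoint hd]
    congr 1
    ext e
    simp only [hA, hE, Finset.mem_filter, Finset.mem_univ, true_and, Finset.mem_union]
    cases hc : c e <;> cases hb : (xb e.1 && yb e.2.1 && zb e.2.2) <;> simp
  have hs : ((Finset.univ.filter (fun e : Fin n × Fin m × Fin l =>
      (xb e.1 && yb e.2.1 && zb e.2.2) = true)).filter (fun e => c e = true)).card = A.card := by
    congr 1
    rw [Finset.filter_filter]
    ext e
    simp only [hA, Finset.mem_filter, Finset.mem_univ, true_and]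
    tauto
  rw [hbar, halt] at h
  omega

set_option maxHeartbeats 1000000 in
/-- Fully-random corruption model with constant corruption probability `p > 1/2` and ground
truth of density ratios `rx, ry, rz ∈ (0,1]`:  the probability that rank-one Boolean tensor
factorization recovers the ground truth (i.e. that the ground truth is the unique minimizer
of the objective) is at most
`exp(-2 min{rx n · ry m, rx n · rz l, ry m · rz l} (p - 1/2)^2)`,
which tends to `0` as `n, m, l → ∞`. -/
theorem stmt19 {Ω : Type*} [MeasurableSpace Ω] (μ : Measure Ω) [IsProbabilityMeasure μ]
    {n m l : ℕ} (hn : 0 < n) (hm : 0 < m) (hl : 0 < l)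
    (p : ℝ) (hp : 1 / 2 < p) (hp1 : p ≤ 1)
    (rx ry rz : ℝ) (hx0 : 0 < rx) (hx1 : rx ≤ 1) (hy0 : 0 < ry) (hy1 : ry ≤ 1)
    (hz0 : 0 < rz) (hz1 : rz ≤ 1)
    (xb : Fin n → Bool) (yb : Fin m → Bool) (zb : Fin l → Bool)
    (hrx : ((Finset.univ.filter (fun i => xb i = true)).card : ℝ) = rx * n)
    (hry : ((Finset.univ.filter (fun j => yb j = true)).card : ℝ) = ry * m)
    (hrz : ((Finset.univ.filter (fun k => zb k = true)).card : ℝ) = rz * l)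
    (C : Fin n × Fin m × Fin l → Ω → Bool)
    (hmeas : ∀ e, Measurable (C e))
    (hber : ∀ e, μ {ω | C e ω = true} = ENNReal.ofReal p)
    (hind : iIndepFun C μ) :
    μ {ω | ∀ x y z, ¬(x = xb ∧ y = yb ∧ z = zb) →
          objCount (fun e => xor (C e ω) (xb e.1 && yb e.2.1 && zb e.2.2)) xb yb zb
            < objCount (fun e => xor (C e ω) (xb e.1 && yb e.2.1 && zb e.2.2)) x y z}
      ≤ ENNReal.ofReal
          (Real.exp (-2 * min (min (rx * n * (ry * m)) (rx * n * (rz * l))) (ry * m * (rz * l))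
            * (p - 1 / 2) ^ 2)) := by
  classical
  have hq0 : (0:ℝ) ≤ 1 - p := by linarith
  have hp0 : (0:ℝ) ≤ p := by linarith
  have hqp : 1 - p ≤ p := by linarith
  set D : Finset (Fin n × Fin m × Fin l) :=
    Finset.univ.filter (fun e => (xb e.1 && yb e.2.1 && zb e.2.2) = true) with hD
  set N := D.card with hN
  have hDprod : D = (Finset.univ.filter fun i => xb i = true) ×ˢ
      ((Finset.univ.filter fun j => yb j = true) ×ˢ (Finset.univ.filter fun k => zb k = true)) := by
    ext e
    simp [hD, Finset.mem_product, Bool.and_eq_true, and_assoc]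
  have hNreal : (N : ℝ) = rx * ↑n * (ry * ↑m) * (rz * ↑l) := by
    rw [hN, hDprod, Finset.card_product, Finset.card_product]
    push_cast
    rw [hrx, hry, hrz]; ring
  have hczpos : 0 < (Finset.univ.filter fun k => zb k = true).card := by
    have h0 : (0:ℝ) < rz * (l:ℝ) := by positivity
    rw [← hrz] at h0
    exact_mod_cast h0
  have hcz : (1:ℝ) ≤ rz * l := by
    rw [← hrz]
    exact_mod_cast hczpos
  have hzb : ∃ k, zb k = true := by
    obtain ⟨k, hk⟩ := Finset.card_pos.mp hczpos
    exact ⟨k, (Finset.mem_filter.mp hk).2⟩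
  set BS : Finset (Finset (Fin n × Fin m × Fin l)) :=
    D.powerset.filter (fun s => 2 * s.card < N) with hBS
  set Aset : Set Ω := ⋃ s ∈ BS, ⋂ e ∈ D, C e ⁻¹' {decide (e ∈ s)} with hAset
  have hsub : {ω | ∀ x y z, ¬(x = xb ∧ y = yb ∧ z = zb) →
          objCount (fun e => xor (C e ω) (xb e.1 && yb e.2.1 && zb e.2.2)) xb yb zb
            < objCount (fun e => xor (C e ω) (xb e.1 && yb e.2.1 && zb e.2.2)) x y z} ⊆ Aset := by
    intro ω hω
    have hne : ¬(xb = xb ∧ yb = yb ∧ (fun _ : Fin l => false) = zb) := by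
      rintro ⟨-, -, h3⟩
      obtain ⟨k, hk⟩ := hzb
      rw [← h3] at hk
      simp at hk
    have h1 := hω xb yb (fun _ => false) hne
    have h2 := count_aux xb yb zb (fun e => C e ω) h1
    rw [← hD] at h2
    rw [hAset]
    refine Set.mem_iUnion₂.mpr ⟨D.filter (fun e => C e ω = true), ?_, ?_⟩
    · rw [hBS]
      exact Finset.mem_filter.mpr ⟨Finset.mem_powerset.mpr (Finset.filter_subset _ _), h2⟩
    · refine Set.mem_iInter₂.mpr fun e he => ?_
      show C e ω = decide (e ∈ D.filter (fun e => C e ω = true))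
      cases hc : C e ω
      · simp [Finset.mem_filter, hc]
      · simp [Finset.mem_filter, hc, he]
  refine le_trans (measure_mono hsub) ?_
  have step2 : μ Aset ≤ ∑ s ∈ BS, ∏ e ∈ D,
      (if e ∈ s then ENNReal.ofReal p else ENNReal.ofReal (1 - p)) := by
    rw [hAset]
    refine le_trans (measure_biUnion_finset_le _ _) (Finset.sum_le_sum ?_)
    intro s _
    rw [hind.meas_biInter (fun e _ => ⟨{decide (e ∈ s)}, trivial, rfl⟩)]
    refine le_of_eq (Finset.prod_congr rfl ?_)
    intro e _
    have htrue : μ {ω | C e ω = true} = ENNReal.ofReal p := hber e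
    have hfalse : μ {ω | C e ω = false} = ENNReal.ofReal (1 - p) := by
      have hmeasset : MeasurableSet {ω | C e ω = true} :=
        (hmeas e) (measurableSet_singleton true)
      have hcompl : {ω | C e ω = false} = {ω | C e ω = true}ᶜ := by
        ext ω
        simp
      rw [hcompl, prob_compl_eq_one_sub hmeasset, htrue, ← ENNReal.ofReal_one,
        ← ENNReal.ofReal_sub _ hp0]
    by_cases hes : e ∈ s
    · rw [if_pos hes, show (decide (e ∈ s)) = true from by simp [hes]]
      exact htrue
    · rw [if_neg hes, show (decide (e ∈ s)) = false from by simp [hes]]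
      exact hfalse
  refine le_trans step2 ?_
  have hsum : ∑ s ∈ BS, ∏ e ∈ D, (if e ∈ s then ENNReal.ofReal p else ENNReal.ofReal (1 - p))
      = ENNReal.ofReal (∑ s ∈ BS, ∏ e ∈ D, (if e ∈ s then p else 1 - p)) := by
    rw [ENNReal.ofReal_sum_of_nonneg
      (fun s _ => Finset.prod_nonneg (fun e _ => by split <;> linarith))]
    refine Finset.sum_congr rfl fun s _ => ?_
    rw [ENNReal.ofReal_prod_of_nonneg (fun e _ => by split <;> linarith)]
    refine Finset.prod_congr rfl fun e _ => ?_
    split <;> rfl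
  rw [hsum]
  apply ENNReal.ofReal_le_ofReal
  set sq := Real.sqrt (p * (1 - p)) with hsq
  have hsq0 : 0 ≤ sq := Real.sqrt_nonneg _
  have hterm : ∀ s ∈ BS, ∏ e ∈ D, (if e ∈ s then p else 1 - p) ≤ sq ^ N := by
    intro s hsmem
    rw [hBS, Finset.mem_filter, Finset.mem_powerset] at hsmem
    obtain ⟨hssub, hslt⟩ := hsmem
    have e1 : ∏ e ∈ D, (if e ∈ s then p else 1 - p) = p ^ s.card * (1 - p) ^ (N - s.card) := by
      rw [← Finset.prod_filter_mul_prod_filter_not D (· ∈ s)]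
      congr 1
      · rw [Finset.prod_congr rfl (fun e he => if_pos (Finset.mem_filter.mp he).2),
          Finset.prod_const]
        congr 1
        rw [Finset.filter_mem_eq_inter, Finset.inter_eq_right.mpr hssub]
      · rw [Finset.prod_congr rfl (fun e he => if_neg (Finset.mem_filter.mp he).2),
          Finset.prod_const]
        congr 1
        have hsd : D.filter (fun e => ¬ e ∈ s) = D \ s := by
          ext e
          simp [Finset.mem_sdiff]
        rw [hsd, Finset.card_sdiff_of_subset hssub, hN]
    rw [e1]
    exact aux_pow_le hq0 hqp (le_of_lt hslt)
  have hBScard : BS.card ≤ 2 ^ N := by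
    calc BS.card ≤ D.powerset.card := Finset.card_le_card (Finset.filter_subset _ _)
      _ = 2 ^ N := by rw [Finset.card_powerset, hN]
  have hsum2 : ∑ s ∈ BS, ∏ e ∈ D, (if e ∈ s then p else 1 - p) ≤ (2 * sq) ^ N := by
    calc ∑ s ∈ BS, ∏ e ∈ D, (if e ∈ s then p else 1 - p)
        ≤ BS.card • (sq ^ N) := Finset.sum_le_card_nsmul _ _ _ hterm
      _ = (BS.card : ℝ) * sq ^ N := nsmul_eq_mul _ _
      _ ≤ (2 ^ N : ℝ) * sq ^ N := by
          refine mul_le_mul_of_nonneg_right ?_ (by positivity)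
          exact_mod_cast hBScard
      _ = (2 * sq) ^ N := by rw [mul_pow]
  refine hsum2.trans ?_
  have h3 : (2 * sq) ^ N ≤ Real.exp (-2 * (p - 1 / 2) ^ 2) ^ N :=
    pow_le_pow_left₀ (by positivity) (aux_sqrt_exp p) N
  refine h3.trans ?_
  rw [← Real.exp_nat_mul]
  apply Real.exp_le_exp.mpr
  have hM : min (min (rx * ↑n * (ry * ↑m)) (rx * ↑n * (rz * ↑l))) (ry * ↑m * (rz * ↑l))
      ≤ (N : ℝ) := by
    have h1 : min (min (rx * ↑n * (ry * ↑m)) (rx * ↑n * (rz * ↑l))) (ry * ↑m * (rz * ↑l))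
        ≤ rx * ↑n * (ry * ↑m) := le_trans (min_le_left _ _) (min_le_left _ _)
    have hA0 : (0:ℝ) ≤ rx * ↑n * (ry * ↑m) := by positivity
    have h2 : rx * ↑n * (ry * ↑m) ≤ (N : ℝ) := by
      rw [hNreal]
      nlinarith [mul_le_mul_of_nonneg_left hcz hA0]
    linarith
  nlinarith [mul_nonneg (sub_nonneg.mpr hM) (sq_nonneg (p - 1 / 2))]
end
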